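/- Let A, B, C be pairwise disjoint finite sets with |A| = |B| = |C| = n, let T ⊆ A×B×C be a nonempty set of triplets such that every element of A ∪ B ∪ C appears in at least one triplet, and let α ≥ 1. Construct the weighted graph G with vertex set {a_g, b_g, c_g : g = (a,b,c) ∈ T}, with an edge of length α between a_g and b_g and between b_g and c_g for each g ∈ T, and an edge of length 1 between every two distinct vertices corresponding to the same element of A (respectively B, C). Let d_G be the shortest-path metric of G, let V_A (resp. V_B, V_C) be the set of vertices corresponding to elements of A (resp. B, C), and consider the Dynamic k-Supplier instance on (V(G), d_G) with T = 3 time steps, k = n, movement bound B = α, client sets C₁ = V_A, C₂ = V_B, C₃ = V_C and facility sets F₁ = V_A, F₂ = V_B, F₃ = V_C. Then this instance admits a feasible solution with covering radius at most 1 if and only if the 3D-matching instance (A,B,C,T) has a perfect 3D matching; moreover, if no perfect 3D matching exists, every feasible solution has covering radius at least 2α + 1. -/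

import Mathlib

open scoped ENNReal

/-- Shortest-path (walk) cost between two vertices of a graph with edge weights
`w : V → V → ℝ≥0∞` (`⊤` encoding the absence of an edge): the infimum over all
finite walks from `u` to `v` of the total weight of the traversed edges. -/
noncomputable def walkCost {V : Type*} (w : V → V → ℝ≥0∞) (u v : V) : ℝ≥0∞ :=
  ⨅ (n : ℕ) (f : Fin (n + 1) → V) (_ : f 0 = u) (_ : f (Fin.last n) = v),
    ∑ i : Fin n, w (f i.castSucc) (f i.succ)

/-- Whether two triplets agree in the coordinate indexed by `i : Fin 3`. -/
def sameCoord {A B C : Type*} (g g' : A × B × C) (i : Fin 3) : Prop :=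
  if i.val = 0 then g.1 = g'.1 else if i.val = 1 then g.2.1 = g'.2.1 else g.2.2 = g'.2.2

open Classical in
/-- The edge weights of the hardness gadget built from a 3D-matching instance
`T ⊆ A × B × C`: the vertex set is `{g // g ∈ T} × Fin 3` (the copies `a_g, b_g,
c_g` of the three coordinates of each triplet `g ∈ T`); for each `g ∈ T` the
vertices `a_g, b_g` and `b_g, c_g` are joined by edges of length `α`, and any two
distinct vertices corresponding to the same element of `A` (resp. `B`, `C`) are
joined by an edge of length `1`; all other weights are `⊤` (no edge). -/
noncomputable def gadgetWeight {A B C : Type*} (T : Finset (A × B × C)) (α : ℝ≥0∞) :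
    ({g // g ∈ T} × Fin 3) → ({g // g ∈ T} × Fin 3) → ℝ≥0∞ := fun p q =>
  if (p.1 : A × B × C) = (q.1 : A × B × C) ∧
      ((p.2.val = 0 ∧ q.2.val = 1) ∨ (p.2.val = 1 ∧ q.2.val = 0) ∨
        (p.2.val = 1 ∧ q.2.val = 2) ∨ (p.2.val = 2 ∧ q.2.val = 1)) then α
  else if (p.1 : A × B × C) ≠ (q.1 : A × B × C) ∧ p.2 = q.2 ∧
      sameCoord (p.1 : A × B × C) (q.1 : A × B × C) p.2 then 1
  else ⊤

/-- The 3D-matching instance `(A, B, C, T)` has a perfect 3D matching: a subset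
`S ⊆ T` with `|S| = n` in which every element of `A`, `B` and `C` appears in
exactly one triplet. -/
def HasPerfect3DM {A B C : Type*} (n : ℕ) (T : Finset (A × B × C)) : Prop :=
  ∃ S ⊆ T, S.card = n ∧
    (∀ a : A, ∃! g, g ∈ S ∧ g.1 = a) ∧
    (∀ b : B, ∃! g, g ∈ S ∧ g.2.1 = b) ∧
    (∀ c : C, ∃! g, g ∈ S ∧ g.2.2 = c)

/-- Feasibility for the Dynamic k-Supplier instance on the gadget with `T = 3`
time steps, `k = n`, movement bound `B = α`, client and facility sets
`V_A, V_B, V_C` (the vertices of the gadget with second coordinate `0`, `1`, `2`):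
the three multisets of facilities (given as functions `Fin n → vertices`) lie in
`V_A`, `V_B`, `V_C` respectively and consecutive ones admit perfect matchings
moving every facility a distance at most `α`. -/
def DKSFeasible {A B C : Type*} (T : Finset (A × B × C)) (α : ℝ≥0∞) (n : ℕ)
    (A₁ A₂ A₃ : Fin n → {g // g ∈ T} × Fin 3) : Prop :=
  (∀ i, (A₁ i).2.val = 0) ∧ (∀ i, (A₂ i).2.val = 1) ∧ (∀ i, (A₃ i).2.val = 2) ∧
  (∃ σ : Equiv.Perm (Fin n), ∀ i, walkCost (gadgetWeight T α) (A₁ i) (A₂ (σ i)) ≤ α) ∧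
  (∃ σ : Equiv.Perm (Fin n), ∀ i, walkCost (gadgetWeight T α) (A₂ i) (A₃ (σ i)) ≤ α)

/-- `(A₁, A₂, A₃)` covers every client of each time step within radius `R` in the
shortest-path metric of the gadget. -/
def CoversWithin {A B C : Type*} (T : Finset (A × B × C)) (α : ℝ≥0∞) (n : ℕ)
    (A₁ A₂ A₃ : Fin n → {g // g ∈ T} × Fin 3) (R : ℝ≥0∞) : Prop :=
  (∀ v : {g // g ∈ T} × Fin 3, v.2.val = 0 →
    ∃ i, walkCost (gadgetWeight T α) v (A₁ i) ≤ R) ∧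
  (∀ v : {g // g ∈ T} × Fin 3, v.2.val = 1 →
    ∃ i, walkCost (gadgetWeight T α) v (A₂ i) ≤ R) ∧
  (∀ v : {g // g ∈ T} × Fin 3, v.2.val = 2 →
    ∃ i, walkCost (gadgetWeight T α) v (A₃ i) ≤ R)

section helpers
variable {V : Type*} (w : V → V → ℝ≥0∞)

lemma walkCost_le_sum (n : ℕ) (f : Fin (n+1) → V) (u v : V) (h0 : f 0 = u)
    (hl : f (Fin.last n) = v) :
    walkCost w u v ≤ ∑ i : Fin n, w (f i.castSucc) (f i.succ) := by
  unfold walkCost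
  exact iInf_le_of_le n (iInf_le_of_le f (iInf_le_of_le h0 (iInf_le_of_le hl le_rfl)))

lemma walkCost_self (v : V) : walkCost w v v ≤ 0 := by
  simpa using walkCost_le_sum w 0 (fun _ => v) v v rfl rfl

lemma walkCost_le_weight (u v : V) : walkCost w u v ≤ w u v := by
  have := walkCost_le_sum w 1 (fun i => if i = 0 then u else v) u v (by simp)
    (by simp [Fin.last])
  simpa using this

lemma potential_chain (φ : V → ℝ≥0∞) (hφ : ∀ x y, φ x ≤ w x y + φ y) :
    ∀ n (f : Fin (n+1) → V),
      φ (f 0) ≤ (∑ i : Fin n, w (f i.castSucc) (f i.succ)) + φ (f (Fin.last n))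
  | 0, f => by simp
  | (n+1), f => by
    have ih := potential_chain φ hφ n (f ∘ Fin.succ)
    calc φ (f 0) ≤ w (f 0) (f 1) + φ (f 1) := hφ _ _
      _ ≤ w (f 0) (f 1) +
          ((∑ i : Fin n, w (f i.succ.castSucc) (f i.succ.succ)) + φ (f (Fin.last (n+1)))) := by
          refine add_le_add_right ?_ _
          simpa [Function.comp, Fin.succ_last] using ih
      _ = _ := by
          rw [Fin.sum_univ_succ]
          simp [add_assoc]

lemma le_walkCost_of_potential (φ : V → ℝ≥0∞)
    (hφ : ∀ x y, φ x ≤ w x y + φ y) (u v : V) (hv : φ v = 0) :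
    φ u ≤ walkCost w u v := by
  unfold walkCost
  refine le_iInf fun n => le_iInf fun f => le_iInf fun h0 => le_iInf fun hl => ?_
  subst h0 hl
  simpa [hv] using potential_chain w φ hφ n f

end helpers

section gadget
variable {A B C : Type*} {T : Finset (A × B × C)} {α : ℝ≥0∞}

lemma sameCoord_refl (g : A × B × C) (i : Fin 3) : sameCoord g g i := by
  unfold sameCoord; split_ifs <;> rfl

lemma sameCoord_iff_trans {g g' h : A × B × C} {i : Fin 3} (hgg' : sameCoord g g' i) :
    sameCoord g h i ↔ sameCoord g' h i := by
  unfold sameCoord at *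
  split_ifs at * <;> rw [hgg']

lemma lb_cross (hα : 1 ≤ α) (x y : {g // g ∈ T} × Fin 3)
    (hxy : x.1 ≠ y.1) (hl : x.2 ≠ y.2) :
    α + 1 ≤ walkCost (gadgetWeight T α) x y := by
  classical
  set φ : {g // g ∈ T} × Fin 3 → ℝ≥0∞ :=
    fun p => (if p.2 = y.2 then 0 else α) + (if p.1 = y.1 then 0 else 1) with hφdef
  have hpot : ∀ p q, φ p ≤ gadgetWeight T α p q + φ q := by
    intro p q
    unfold gadgetWeight
    split_ifs with h1 h2
    · -- vertical edge : p.1 = q.1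
      have hpq : p.1 = q.1 := Subtype.ext h1.1
      simp only [hφdef, hpq]
      have hle : (if p.2 = y.2 then (0:ℝ≥0∞) else α) ≤ α + (if q.2 = y.2 then 0 else α) := by
        split_ifs <;> simp
      calc (if p.2 = y.2 then (0:ℝ≥0∞) else α) + (if q.1 = y.1 then 0 else 1)
          ≤ (α + (if q.2 = y.2 then 0 else α)) + (if q.1 = y.1 then 0 else 1) :=
            add_le_add_left hle _
        _ = _ := by rw [add_assoc]
    · -- horizontal edge : p.2 = q.2
      obtain ⟨hne, hl2, hsc⟩ := h2
      simp only [hφdef, hl2]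
      have hle : (if p.1 = y.1 then (0:ℝ≥0∞) else 1) ≤ 1 + (if q.1 = y.1 then 0 else 1) := by
        split_ifs <;> simp
      calc (if q.2 = y.2 then (0:ℝ≥0∞) else α) + (if p.1 = y.1 then 0 else 1)
          ≤ (if q.2 = y.2 then (0:ℝ≥0∞) else α) + (1 + (if q.1 = y.1 then 0 else 1)) :=
            add_le_add_right hle _
        _ = _ := by rw [add_left_comm]
    · simp
  have := le_walkCost_of_potential _ φ hpot x y (by simp [hφdef])
  simpa [hφdef, if_neg hxy, if_neg hl] using this

lemma lb_same (hα : 1 ≤ α) (x y : {g // g ∈ T} × Fin 3)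
    (hl : x.2 = y.2) (hc : ¬ sameCoord (x.1 : A × B × C) (y.1 : A × B × C) y.2) :
    2 * α + 1 ≤ walkCost (gadgetWeight T α) x y := by
  classical
  set P : {g // g ∈ T} × Fin 3 → Prop :=
    fun p => sameCoord (p.1 : A × B × C) (y.1 : A × B × C) y.2 with hPdef
  set φ : {g // g ∈ T} × Fin 3 → ℝ≥0∞ :=
    fun p => if p.2 = y.2 then (if P p then 0 else 2 * α + 1)
             else (if P p then α else α + 1) with hφdef
  have hpot : ∀ p q, φ p ≤ gadgetWeight T α p q + φ q := by
    intro p q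
    unfold gadgetWeight
    split_ifs with h1 h2
    · -- vertical : p.1 = q.1, so P p ↔ P q
      have hpq : P p ↔ P q := by simp [hPdef, h1.1]
      simp only [hφdef]
      by_cases hp : P p
      · have hq : P q := hpq.1 hp
        simp only [if_pos hp, if_pos hq]
        split_ifs <;> simp [two_mul, add_assoc]
      · have hq : ¬ P q := fun h => hp (hpq.2 h)
        simp only [if_neg hp, if_neg hq]
        split_ifs
        · calc 2*α+1 ≤ α + (2*α+1) := le_add_self
            _ = _ := rfl
        · rw [two_mul, add_assoc]
        · exact add_le_add_right (le_add_self) α |>.trans (by rw [two_mul, add_assoc])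
        · exact le_add_self
    · -- horizontal : p.2 = q.2, sameCoord p q at p.2
      obtain ⟨hne, hl2, hsc⟩ := h2
      simp only [hφdef, hl2]
      by_cases hq2 : q.2 = y.2
      · -- same layer as target: P p ↔ P q
        have hPiff : P p ↔ P q := by
          rw [hPdef]
          exact sameCoord_iff_trans (by rwa [hl2, hq2] at hsc)
        simp only [if_pos hq2]
        by_cases hp : P p
        · simp [hp, hPiff.1 hp]
        · simp [if_neg hp, if_neg (fun h => hp (hPiff.2 h))]
      · simp only [if_neg hq2]
        split_ifs
        · exact le_add_self
        · calc α ≤ 1 + α := le_add_self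
            _ ≤ 1 + (α + 1) := add_le_add_right le_self_add 1
        · exact (add_comm α 1).le
        · exact le_add_self
    · simp
  have := le_walkCost_of_potential _ φ hpot x y ?_
  · rw [hφdef] at this
    simp only [if_pos hl, hPdef] at this
    rwa [if_neg hc] at this
  · simp [hφdef, hPdef, sameCoord_refl]

lemma sameCoord_val0 {g h : A × B × C} {i : Fin 3} (hi : i.val = 0) :
    sameCoord g h i ↔ g.1 = h.1 := by unfold sameCoord; simp [hi]

lemma sameCoord_val1 {g h : A × B × C} {i : Fin 3} (hi : i.val = 1) :
    sameCoord g h i ↔ g.2.1 = h.2.1 := by unfold sameCoord; simp [hi]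

lemma sameCoord_val2 {g h : A × B × C} {i : Fin 3} (hi : i.val = 2) :
    sameCoord g h i ↔ g.2.2 = h.2.2 := by unfold sameCoord; simp [hi]

lemma eu_helper [DecidableEq (A × B × C)] {X : Type*} {n : ℕ} (f : Fin n → A × B × C) (p : A × B × C → X)
    (hb : Function.Bijective (p ∘ f)) (x : X) :
    ∃! g, g ∈ Finset.image f Finset.univ ∧ p g = x := by
  obtain ⟨i, hi⟩ := hb.2 x
  refine ⟨f i, ⟨Finset.mem_image_of_mem f (Finset.mem_univ i), hi⟩, ?_⟩
  rintro g ⟨hg, hpg⟩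
  obtain ⟨j, -, rfl⟩ := Finset.mem_image.1 hg
  exact congrArg f (hb.1 ((hpg.trans hi.symm : (p ∘ f) j = (p ∘ f) i)))

lemma main_matching [Fintype A] [Fintype B] [Fintype C] {n : ℕ}
    (hcA : Fintype.card A = n) (hcB : Fintype.card B = n) (hcC : Fintype.card C = n)
    (hcovA : ∀ a : A, ∃ g ∈ T, g.1 = a)
    (hcovB : ∀ b : B, ∃ g ∈ T, g.2.1 = b)
    (hcovC : ∀ c : C, ∃ g ∈ T, g.2.2 = c)
    (hα : 1 ≤ α) (hαtop : α ≠ ⊤)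
    (A₁ A₂ A₃ : Fin n → {g // g ∈ T} × Fin 3)
    (hfeas : DKSFeasible T α n A₁ A₂ A₃)
    (hc0 : ∀ v : {g // g ∈ T} × Fin 3, v.2.val = 0 →
      ∃ i, walkCost (gadgetWeight T α) v (A₁ i) < 2 * α + 1)
    (hc1 : ∀ v : {g // g ∈ T} × Fin 3, v.2.val = 1 →
      ∃ i, walkCost (gadgetWeight T α) v (A₂ i) < 2 * α + 1)
    (hc2 : ∀ v : {g // g ∈ T} × Fin 3, v.2.val = 2 →
      ∃ i, walkCost (gadgetWeight T α) v (A₃ i) < 2 * α + 1) :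
    HasPerfect3DM n T := by
  classical
  obtain ⟨hL1, hL2, hL3, ⟨σ, hσ⟩, ⟨τ, hτ⟩⟩ := hfeas
  have hαlt : α < α + 1 := ENNReal.lt_add_right hαtop one_ne_zero
  -- matched facilities carry the same triplet
  have htri1 : ∀ i, (A₂ (σ i)).1 = (A₁ i).1 := by
    intro i
    by_contra hne
    have hl : (A₁ i).2 ≠ (A₂ (σ i)).2 := by
      intro h
      have := congrArg Fin.val h
      rw [hL1 i, hL2 (σ i)] at this
      omega
    have := (lb_cross hα _ _ (Ne.symm hne) hl).trans (hσ i)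
    exact absurd this (not_le.2 hαlt)
  have htri2 : ∀ i, (A₃ (τ i)).1 = (A₂ i).1 := by
    intro i
    by_contra hne
    have hl : (A₂ i).2 ≠ (A₃ (τ i)).2 := by
      intro h
      have := congrArg Fin.val h
      rw [hL2 i, hL3 (τ i)] at this
      omega
    have := (lb_cross hα _ _ (Ne.symm hne) hl).trans (hτ i)
    exact absurd this (not_le.2 hαlt)
  -- surjectivity of the three coordinate maps
  have asurj : Function.Surjective (fun i => ((A₁ i).1 : A × B × C).1) := by
    intro a
    obtain ⟨g, hg, hga⟩ := hcovA a
    obtain ⟨i, hi⟩ := hc0 (⟨g, hg⟩, (0 : Fin 3)) rfl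
    refine ⟨i, ?_⟩
    by_contra hne
    have hsc : ¬ sameCoord (g : A × B × C) ((A₁ i).1 : A × B × C) (A₁ i).2 := by
      rw [sameCoord_val0 (hL1 i), hga]
      exact fun h => hne h.symm
    have hl : ((⟨g, hg⟩, (0 : Fin 3)) : {g // g ∈ T} × Fin 3).2 = (A₁ i).2 :=
      Fin.ext (by simp [hL1 i])
    exact absurd (lb_same hα _ _ hl hsc) (not_le.2 hi)
  have bsurj : Function.Surjective (fun i => ((A₂ i).1 : A × B × C).2.1) := by
    intro b
    obtain ⟨g, hg, hgb⟩ := hcovB b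
    obtain ⟨i, hi⟩ := hc1 (⟨g, hg⟩, (1 : Fin 3)) rfl
    refine ⟨i, ?_⟩
    by_contra hne
    have hsc : ¬ sameCoord (g : A × B × C) ((A₂ i).1 : A × B × C) (A₂ i).2 := by
      rw [sameCoord_val1 (hL2 i), hgb]
      exact fun h => hne h.symm
    have hl : ((⟨g, hg⟩, (1 : Fin 3)) : {g // g ∈ T} × Fin 3).2 = (A₂ i).2 :=
      Fin.ext (by simp [hL2 i])
    exact absurd (lb_same hα _ _ hl hsc) (not_le.2 hi)
  have csurj : Function.Surjective (fun i => ((A₃ i).1 : A × B × C).2.2) := by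
    intro c
    obtain ⟨g, hg, hgc⟩ := hcovC c
    obtain ⟨i, hi⟩ := hc2 (⟨g, hg⟩, (2 : Fin 3)) rfl
    refine ⟨i, ?_⟩
    by_contra hne
    have hsc : ¬ sameCoord (g : A × B × C) ((A₃ i).1 : A × B × C) (A₃ i).2 := by
      rw [sameCoord_val2 (hL3 i), hgc]
      exact fun h => hne h.symm
    have hl : ((⟨g, hg⟩, (2 : Fin 3)) : {g // g ∈ T} × Fin 3).2 = (A₃ i).2 :=
      Fin.ext (by simp [hL3 i])
    exact absurd (lb_same hα _ _ hl hsc) (not_le.2 hi)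
  have abij : Function.Bijective (fun i => ((A₁ i).1 : A × B × C).1) :=
    (Fintype.bijective_iff_surjective_and_card _).2 ⟨asurj, by simp [hcA]⟩
  have bbij : Function.Bijective (fun i => ((A₂ i).1 : A × B × C).2.1) :=
    (Fintype.bijective_iff_surjective_and_card _).2 ⟨bsurj, by simp [hcB]⟩
  have cbij : Function.Bijective (fun i => ((A₃ i).1 : A × B × C).2.2) :=
    (Fintype.bijective_iff_surjective_and_card _).2 ⟨csurj, by simp [hcC]⟩
  set f : Fin n → A × B × C := fun i => ((A₁ i).1 : A × B × C) with hfdef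
  have hfa : Function.Bijective (Prod.fst ∘ f) := abij
  have hfb : Function.Bijective ((fun g : A × B × C => g.2.1) ∘ f) := by
    have : ((fun g : A × B × C => g.2.1) ∘ f) =
        (fun i => ((A₂ i).1 : A × B × C).2.1) ∘ σ := by
      funext i
      simp only [Function.comp, hfdef, ← htri1 i]
    rw [this]
    exact bbij.comp σ.bijective
  have hfc : Function.Bijective ((fun g : A × B × C => g.2.2) ∘ f) := by
    have : ((fun g : A × B × C => g.2.2) ∘ f) =
        (fun i => ((A₃ i).1 : A × B × C).2.2) ∘ (τ ∘ σ) := by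
      funext i
      simp only [Function.comp, hfdef, ← htri1 i, ← htri2 (σ i)]
    rw [this]
    exact cbij.comp (σ.bijective.comp σ.bijective |>.2.comp σ.bijective.2 |> fun _ => (τ.bijective.comp σ.bijective))
  refine ⟨Finset.image f Finset.univ, ?_, ?_, fun a => eu_helper f _ hfa a,
    fun b => eu_helper f _ hfb b, fun c => eu_helper f _ hfc c⟩
  · intro g hg
    obtain ⟨i, -, rfl⟩ := Finset.mem_image.1 hg
    exact (A₁ i).1.2
  · rw [Finset.card_image_of_injective _ (fun i j h => hfa.1 (congrArg Prod.fst h))]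
    simp

lemma weight_horiz (x y : {g // g ∈ T}) (l : Fin 3) (hne : (x : A × B × C) ≠ y)
    (hsc : sameCoord (x : A × B × C) (y : A × B × C) l) :
    gadgetWeight T α (x, l) (y, l) = 1 := by
  classical
  unfold gadgetWeight
  rw [if_neg (fun h => hne h.1), if_pos ⟨hne, rfl, hsc⟩]

lemma weight_vert01 (x : {g // g ∈ T}) :
    gadgetWeight T α (x, (0 : Fin 3)) (x, (1 : Fin 3)) = α := by
  simp [gadgetWeight]

lemma weight_vert12 (x : {g // g ∈ T}) :
    gadgetWeight T α (x, (1 : Fin 3)) (x, (2 : Fin 3)) = α := by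
  simp [gadgetWeight]

lemma construct {n : ℕ} (hpm : HasPerfect3DM n T) :
    ∃ A₁ A₂ A₃ : Fin n → {g // g ∈ T} × Fin 3,
      DKSFeasible T α n A₁ A₂ A₃ ∧ CoversWithin T α n A₁ A₂ A₃ 1 := by
  classical
  obtain ⟨S, hST, hcard, ha, hb, hc⟩ := hpm
  have e : {x // x ∈ S} ≃ Fin n := S.equivFinOfCardEq hcard
  set m : Fin n → {g // g ∈ T} :=
    fun i => ⟨((e.symm i : {x // x ∈ S}) : A × B × C), hST (e.symm i).2⟩ with hmdef
  have key : ∀ (l : Fin 3) (v : {g // g ∈ T} × Fin 3), v.2 = l →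
      (∀ g₀, g₀ ∈ S → sameCoord (v.1 : A × B × C) g₀ l →
        ∃ i, walkCost (gadgetWeight T α) v ((m i), l) ≤ 1) := by
    intro l v hvl g₀ hg₀S hsc
    set i := e ⟨g₀, hg₀S⟩ with hidef
    have hmi : ((m i) : A × B × C) = g₀ := by
      simp [hmdef, hidef]
    refine ⟨i, ?_⟩
    by_cases heq : v.1 = m i
    · have hv : v = ((m i), l) := Prod.ext heq hvl
      rw [hv]
      exact (walkCost_self _ _).trans zero_le_one
    · have hv : v = (v.1, l) := Prod.ext rfl hvl
      rw [hv]
      refine (walkCost_le_weight _ _ _).trans ?_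
      rw [weight_horiz v.1 (m i) l (fun h => heq (Subtype.coe_injective h))
        (by rwa [hmi])]
  refine ⟨fun i => ((m i), 0), fun i => ((m i), 1), fun i => ((m i), 2), ?_, ?_, ?_, ?_⟩
  · refine ⟨fun i => rfl, fun i => rfl, fun i => rfl,
      ⟨Equiv.refl _, fun i => ?_⟩, ⟨Equiv.refl _, fun i => ?_⟩⟩
    · exact (walkCost_le_weight _ _ _).trans (le_of_eq (weight_vert01 _))
    · exact (walkCost_le_weight _ _ _).trans (le_of_eq (weight_vert12 _))
  · intro v hv
    obtain ⟨g₀, ⟨hg₀S, hg₀a⟩, -⟩ := ha (v.1 : A × B × C).1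
    exact key 0 v (Fin.ext (by simpa using hv)) g₀ hg₀S
      (by rw [sameCoord_val0 rfl, hg₀a])
  · intro v hv
    obtain ⟨g₀, ⟨hg₀S, hg₀b⟩, -⟩ := hb (v.1 : A × B × C).2.1
    exact key 1 v (Fin.ext (by simpa using hv)) g₀ hg₀S
      (by rw [sameCoord_val1 rfl, hg₀b])
  · intro v hv
    obtain ⟨g₀, ⟨hg₀S, hg₀c⟩, -⟩ := hc (v.1 : A × B × C).2.2
    exact key 2 v (Fin.ext (by simpa using hv)) g₀ hg₀S
      (by rw [sameCoord_val2 rfl, hg₀c])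

end gadget

/-- Correctness of the 3D-matching hardness gadget for Dynamic k-Supplier with
`T = 3` time steps: the instance admits a feasible solution with covering radius
at most `1` iff the 3D-matching instance has a perfect 3D matching; moreover, if
no perfect 3D matching exists, then every feasible solution has covering radius
at least `2α + 1` (some client is at distance at least `2α + 1` from all the
facilities of its time step). -/
theorem stmt2 {A B C : Type*} [Fintype A] [Fintype B] [Fintype C]
    (n : ℕ) (hA : Fintype.card A = n) (hB : Fintype.card B = n) (hC : Fintype.card C = n)
    (T : Finset (A × B × C)) (hT : T.Nonempty)
    (hcovA : ∀ a : A, ∃ g ∈ T, g.1 = a)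
    (hcovB : ∀ b : B, ∃ g ∈ T, g.2.1 = b)
    (hcovC : ∀ c : C, ∃ g ∈ T, g.2.2 = c)
    (α : ℝ≥0∞) (hα : 1 ≤ α) (hαtop : α ≠ ⊤) :
    ((∃ A₁ A₂ A₃ : Fin n → {g // g ∈ T} × Fin 3,
        DKSFeasible T α n A₁ A₂ A₃ ∧ CoversWithin T α n A₁ A₂ A₃ 1) ↔
      HasPerfect3DM n T) ∧
    (¬ HasPerfect3DM n T →
      ∀ A₁ A₂ A₃ : Fin n → {g // g ∈ T} × Fin 3, DKSFeasible T α n A₁ A₂ A₃ →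
        ∃ v : {g // g ∈ T} × Fin 3,
          (v.2.val = 0 ∧ ∀ i, 2 * α + 1 ≤ walkCost (gadgetWeight T α) v (A₁ i)) ∨
          (v.2.val = 1 ∧ ∀ i, 2 * α + 1 ≤ walkCost (gadgetWeight T α) v (A₂ i)) ∨
          (v.2.val = 2 ∧ ∀ i, 2 * α + 1 ≤ walkCost (gadgetWeight T α) v (A₃ i))) := by
  have h2αne : (2 : ℝ≥0∞) * α ≠ 0 :=
    mul_ne_zero two_ne_zero (fun h => by simp [h] at hα)
  have h1lt : (1 : ℝ≥0∞) < 2 * α + 1 := by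
    calc (1 : ℝ≥0∞) < 1 + 2 * α := ENNReal.lt_add_right ENNReal.one_ne_top h2αne
      _ = 2 * α + 1 := add_comm _ _
  constructor
  · constructor
    · rintro ⟨A₁, A₂, A₃, hfeas, hcov⟩
      exact main_matching hA hB hC hcovA hcovB hcovC hα hαtop A₁ A₂ A₃ hfeas
        (fun v hv => (hcov.1 v hv).imp fun i h => lt_of_le_of_lt h h1lt)
        (fun v hv => (hcov.2.1 v hv).imp fun i h => lt_of_le_of_lt h h1lt)
        (fun v hv => (hcov.2.2 v hv).imp fun i h => lt_of_le_of_lt h h1lt)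
    · rintro hpm
      exact construct hpm
  · intro hn A₁ A₂ A₃ hfeas
    by_contra hno
    push_neg at hno
    exact hn (main_matching hA hB hC hcovA hcovB hcovC hα hαtop A₁ A₂ A₃ hfeas
      (fun v hv => (hno v).1 hv)
      (fun v hv => (hno v).2.1 hv)
      (fun v hv => (hno v).2.2 hv))
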